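/- Under the hypotheses of Theorem 4 (margin condition with parameter γ, Hausdorff estimation error ε_n for each set M_ℓ ≈ Ĥ_α(f_ℓ)), define the trust score ξ(h,x) = d(x, M̂_{h̃(x)})/d(x, M̂_{h(x)}) where h̃(x) is the nearest other class. If ξ(h,x) < 1 − γ − (ε_n/(d(x,M_{h(x)}) + ε_n))·(d(x,M_{h̃(x)})/d(x,M_{h(x)}) + 1), then d(x, M_{h̃(x)})/d(x, M_{h(x)}) < 1 − γ and hence h(x) ≠ h*(x). -/

import Mathlib

open Metric Set

/-- 'low trust score implies disagreement with Bayes-optimal':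
with M_ℓ the true high-density sets and M̂_ℓ their estimates with Hausdorff error
ε_n, if the trust score ξ(h,x) = d(x,M̂_{h̃(x)})/d(x,M̂_{h(x)}) satisfies
ξ(h,x) < 1 − γ − (ε_n/(d(x,M_{h(x)})+ε_n))·(d(x,M_{h̃(x)})/d(x,M_{h(x)}) + 1),
then d(x,M_{h̃(x)})/d(x,M_{h(x)}) < 1 − γ and h(x) ≠ h*(x). -/
theorem low_trust_score_implies_disagreement
    (D L : ℕ) (hL : 0 < L)
    (M Mhat : Fin L → Set (EuclideanSpace ℝ (Fin D)))
    (hM : ∀ ℓ, (M ℓ).Nonempty ∧ IsCompact (M ℓ))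
    (hMhat : ∀ ℓ, (Mhat ℓ).Nonempty)
    (εn : ℝ) (hεn : 0 ≤ εn)
    (hedist : ∀ ℓ, EMetric.hausdorffEdist (M ℓ) (Mhat ℓ) ≠ ⊤)
    (hhaus : ∀ ℓ, hausdorffDist (M ℓ) (Mhat ℓ) ≤ εn)
    (γ : ℝ) (hγ0 : 0 < γ) (hγ1 : γ < 1)
    (P : EuclideanSpace ℝ (Fin D) → Fin L → ℝ)
    (hmargin : ∀ x, ∀ i j : Fin L, i ≠ j →
        infDist x (M i) / infDist x (M j) < 1 - γ → P x j < P x i)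
    (hstar : EuclideanSpace ℝ (Fin D) → Fin L)
    (hstar_opt : ∀ x ℓ, P x ℓ ≤ P x (hstar x))
    (h htilde : EuclideanSpace ℝ (Fin D) → Fin L)
    (htilde_ne : ∀ x, htilde x ≠ h x)
    (htilde_min : ∀ x, ∀ ℓ : Fin L, ℓ ≠ h x →
        infDist x (Mhat (htilde x)) ≤ infDist x (Mhat ℓ))
    (ξ : EuclideanSpace ℝ (Fin D) → ℝ)
    (hξ : ∀ x, ξ x = infDist x (Mhat (htilde x)) / infDist x (Mhat (h x)))
    (x : EuclideanSpace ℝ (Fin D))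
    (ha : 0 < infDist x (M (h x)))
    (hahat : 0 < infDist x (Mhat (h x)))
    (hlow : ξ x < 1 - γ - (εn / (infDist x (M (h x)) + εn)) *
        (infDist x (M (htilde x)) / infDist x (M (h x)) + 1)) :
    infDist x (M (htilde x)) / infDist x (M (h x)) < 1 - γ ∧ h x ≠ hstar x := by

  set A := infDist x (M (h x)) with hA
  set B := infDist x (M (htilde x)) with hB
  set Ah := infDist x (Mhat (h x)) with hAh
  set Bh := infDist x (Mhat (htilde x)) with hBh
  have hBnn : 0 ≤ B := infDist_nonneg
  have hBhnn : 0 ≤ Bh := infDist_nonneg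
  have hc : 0 < A + εn := by linarith
  -- Hausdorff bounds
  have hb1 : B ≤ Bh + εn := by
    have hed : EMetric.hausdorffEdist (Mhat (htilde x)) (M (htilde x)) ≠ ⊤ := by
      show Metric.hausdorffEDist _ _ ≠ ⊤; rw [Metric.hausdorffEDist_comm]; exact hedist _
    have := infDist_le_infDist_add_hausdorffDist (x := x) hed
    have h2 := hhaus (htilde x)
    rw [hausdorffDist_comm] at this
    linarith
  have hb2 : Ah ≤ A + εn := by
    have := infDist_le_infDist_add_hausdorffDist (x := x)
      (hedist (h x))
    have h2 := hhaus (h x)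
    linarith
  -- ξ x ≥ (B - εn)/(A + εn)
  have step1 : (B - εn) / (A + εn) ≤ Bh / Ah := by
    rcases le_or_gt (B - εn) 0 with h0 | h0
    · exact le_trans (div_nonpos_of_nonpos_of_nonneg h0 hc.le) (div_nonneg hBhnn hahat.le)
    · calc (B - εn) / (A + εn) ≤ Bh / (A + εn) := by gcongr ?_ / _; linarith
          _ ≤ Bh / Ah := div_le_div_of_nonneg_left hBhnn hahat hb2
  have hξx : Bh / Ah < 1 - γ - (εn / (A + εn)) * (B / A + 1) := by
    rw [hξ x] at hlow; exact hlow
  have step2 : B - εn < (1 - γ - (εn / (A + εn)) * (B / A + 1)) * (A + εn) :=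
    (div_lt_iff₀ hc).mp (lt_of_le_of_lt step1 hξx)
  have hAne : A ≠ 0 := ne_of_gt ha
  have hcne : A + εn ≠ 0 := ne_of_gt hc
  have hec : εn / (A + εn) * (A + εn) = εn := div_mul_cancel₀ _ hcne
  have hBA : B / A * A = B := div_mul_cancel₀ _ hAne
  have key : B / A < 1 - γ := by
    have hmul : B / A * (A + εn) < (1 - γ) * (A + εn) := by nlinarith [step2, hec, hBA]
    exact lt_of_mul_lt_mul_right hmul hc.le
  refine ⟨key, fun heq => ?_⟩
  have hP := hmargin x (htilde x) (h x) (htilde_ne x) key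
  have h2 := hstar_opt x (htilde x)
  rw [← heq] at h2
  linarith
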